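/- arXiv:1506.03035 — 2 statements merged into one kernel-verified Lean document; each statement's English description precedes it below -/
import Mathlib

section
/- Let E and F be Banach spaces over ℂ, let ω : E → F be a bounded linear map, and let C > 0. Suppose (π_γ)_{γ∈Γ} is a net of bounded linear maps E* → F* with ‖π_γ‖ ≤ C for all γ, such that for every f ∈ F* and every y ∈ F the net of scalars (π_γ(ω*(f)))(y) converges to f(y) (i.e. π_γ ∘ ω* converges to the identity of F* in the weak*-operator topology). Then there exists a bounded linear map π : E* → F* with ‖π‖ ≤ C such that π ∘ ω* = id on F*. -/
open NormedSpace Filter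

/-- The adjoint (dual map) of a bounded linear map between Banach spaces over ℂ:
`dualTranspose ω = (f ↦ f ∘ ω) : F* → E*`. -/
noncomputable def dualTranspose {E F : Type*} [NormedAddCommGroup E] [NormedSpace ℂ E]
    [NormedAddCommGroup F] [NormedSpace ℂ F] (ω : E →L[ℂ] F) :
    StrongDual ℂ F →L[ℂ] StrongDual ℂ E :=
  (ContinuousLinearMap.compL ℂ E F ℂ).flip ω

/-- If a net `(π_γ)` of bounded linear maps `E* → F*`, uniformly bounded by `C`, satisfies
`π_γ ∘ ω* → id_{F*}` in the weak*-operator topology, then `ω*` has a bounded left inverse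
`π` with `‖π‖ ≤ C`. -/
theorem stmt2 {E F : Type*} [NormedAddCommGroup E] [NormedSpace ℂ E] [CompleteSpace E]
    [NormedAddCommGroup F] [NormedSpace ℂ F] [CompleteSpace F]
    (ω : E →L[ℂ] F) (C : ℝ) (hC : 0 < C)
    {Γ : Type*} [Nonempty Γ] [Preorder Γ] [IsDirected Γ (· ≤ ·)]
    (π : Γ → (StrongDual ℂ E →L[ℂ] StrongDual ℂ F))
    (hbound : ∀ γ : Γ, ‖π γ‖ ≤ C)
    (hconv : ∀ (f : StrongDual ℂ F) (y : F),
      Tendsto (fun γ : Γ => π γ (dualTranspose ω f) y) atTop (nhds (f y))) :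
    ∃ π₀ : StrongDual ℂ E →L[ℂ] StrongDual ℂ F, ‖π₀‖ ≤ C ∧ ∀ f : StrongDual ℂ F, π₀ (dualTranspose ω f) = f := by
  have hne : (atTop : Filter Γ).NeBot := by
    rw [Filter.atTop_neBot_iff]
    exact ⟨‹_›, ‹_›⟩
  let u : Ultrafilter Γ := Ultrafilter.of atTop
  have hu : (u : Filter Γ) ≤ atTop := Ultrafilter.of_le atTop
  have hb : ∀ (g : StrongDual ℂ E) (y : F) (γ : Γ), ‖π γ g y‖ ≤ C * ‖g‖ * ‖y‖ := by
    intro g y γ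
    calc ‖π γ g y‖ ≤ ‖π γ g‖ * ‖y‖ := (π γ g).le_opNorm y
    _ ≤ ‖π γ‖ * ‖g‖ * ‖y‖ := by
        gcongr
        exact (π γ).le_opNorm g
    _ ≤ C * ‖g‖ * ‖y‖ := by gcongr; exact hbound γ
  have key : ∀ (g : StrongDual ℂ E) (y : F),
      ∃ c : ℂ, Tendsto (fun γ => π γ g y) (u : Filter Γ) (nhds c) := by
    intro g y
    have hK : IsCompact (Metric.closedBall (0 : ℂ) (C * ‖g‖ * ‖y‖)) :=
      isCompact_closedBall _ _
    have hmem : ↑(u.map fun γ => π γ g y) ≤ 𝓟 (Metric.closedBall (0 : ℂ) (C * ‖g‖ * ‖y‖)) := by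
      refine le_principal_iff.mpr (Filter.mem_map.mpr ?_)
      refine Filter.univ_mem' fun γ => ?_
      simpa [Metric.mem_closedBall, dist_zero_right] using hb g y γ
    obtain ⟨c, -, hc⟩ := hK.ultrafilter_le_nhds _ hmem
    exact ⟨c, hc⟩
  choose L hL using key
  have hLb : ∀ (g : StrongDual ℂ E) (y : F), ‖L g y‖ ≤ C * ‖g‖ * ‖y‖ := fun g y =>
    le_of_tendsto' (hL g y).norm fun γ => hb g y γ
  -- linearity in y
  have hya : ∀ (g : StrongDual ℂ E) (y z : F), L g (y + z) = L g y + L g z := by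
    intro g y z
    refine tendsto_nhds_unique ?_ ((hL g y).add (hL g z))
    simpa using hL g (y + z)
  have hys : ∀ (g : StrongDual ℂ E) (c : ℂ) (y : F), L g (c • y) = c • L g y := by
    intro g c y
    refine tendsto_nhds_unique ?_ ((hL g y).const_smul c)
    simpa using hL g (c • y)
  have hga : ∀ (g h : StrongDual ℂ E) (y : F), L (g + h) y = L g y + L h y := by
    intro g h y
    refine tendsto_nhds_unique ?_ ((hL g y).add (hL h y))
    simpa using hL (g + h) y
  have hgs : ∀ (c : ℂ) (g : StrongDual ℂ E) (y : F), L (c • g) y = c • L g y := by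
    intro c g y
    refine tendsto_nhds_unique ?_ ((hL g y).const_smul c)
    simpa using hL (c • g) y
  let B : StrongDual ℂ E →ₗ[ℂ] F →ₗ[ℂ] ℂ :=
    { toFun := fun g =>
        { toFun := L g
          map_add' := hya g
          map_smul' := hys g }
      map_add' := fun g h => LinearMap.ext fun y => hga g h y
      map_smul' := fun c g => LinearMap.ext fun y => hgs c g y }
  refine ⟨LinearMap.mkContinuous₂ B C (fun g y => hLb g y), ?_, ?_⟩
  · exact LinearMap.mkContinuous₂_norm_le _ hC.le _
  · intro f
    ext y
    refine tendsto_nhds_unique (hL (dualTranspose ω f) y) ?_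
    exact (hconv f y).mono_left hu
end

section
/- Let E and F be Banach spaces over ℂ and let ω : E → F be a bounded linear map. Then the following are equivalent: (a) there exists a bounded linear map π : E* → F* with π ∘ ω* = id on F*; (b) there exists a bounded linear map ρ : F → E** with ω** ∘ ρ = ι_F, where ι_F : F → F** is the canonical embedding; (c) there exist C > 0 and a net (π_γ) of bounded linear maps E* → F* with ‖π_γ‖ ≤ C for all γ such that for every f ∈ F* and every y ∈ F, (π_γ(ω*(f)))(y) converges to f(y). -/
open NormedSpace Filter Metric

lemma dualTranspose_apply {E F : Type*} [NormedAddCommGroup E] [NormedSpace ℂ E]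
    [NormedAddCommGroup F] [NormedSpace ℂ F] (ω : E →L[ℂ] F) (f : StrongDual ℂ F) (x : E) :
    dualTranspose ω f x = f (ω x) := rfl

lemma exists_tendsto_of_bounded {Γ : Type} (U : Ultrafilter Γ) (h : Γ → ℂ) (M : ℝ)
    (hb : ∀ γ, ‖h γ‖ ≤ M) :
    ∃ c : ℂ, ‖c‖ ≤ M ∧ Tendsto h (U : Filter Γ) (nhds c) := by
  obtain ⟨c, hc, hlim⟩ := (isCompact_closedBall (0 : ℂ) M).ultrafilter_le_nhds (U.map h)
    (le_principal_iff.mpr (mem_map.mpr (Filter.univ_mem'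
      (fun γ => by simpa [mem_closedBall_zero_iff] using hb γ))))
  exact ⟨c, mem_closedBall_zero_iff.mp hc, hlim⟩

/-- Banach-space skeleton of Theorem 2.1: for a bounded linear map `ω : E → F` the
following are equivalent:
(a) the adjoint `ω* : F* → E*` has a bounded left inverse;
(b) there is a bounded linear `ρ : F → E**` with `ω** ∘ ρ = ι_F`;
(c) there are `C > 0` and a uniformly `C`-bounded net of operators `π_γ : E* → F*` with
`π_γ ∘ ω* → id_{F*}` in the weak*-operator topology. -/
theorem stmt4 {E F : Type*} [NormedAddCommGroup E] [NormedSpace ℂ E] [CompleteSpace E]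
    [NormedAddCommGroup F] [NormedSpace ℂ F] [CompleteSpace F]
    (ω : E →L[ℂ] F) :
    List.TFAE [
      (∃ π : StrongDual ℂ E →L[ℂ] StrongDual ℂ F, ∀ f : StrongDual ℂ F, π (dualTranspose ω f) = f),
      (∃ ρ : F →L[ℂ] StrongDual ℂ (StrongDual ℂ E),
        ∀ y : F, dualTranspose (dualTranspose ω) (ρ y) = inclusionInDoubleDual ℂ F y),
      (∃ C : ℝ, 0 < C ∧ ∃ (Γ : Type) (_ : Nonempty Γ) (p : Preorder Γ),
        IsDirected Γ (fun a b => p.le a b) ∧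
        ∃ π : Γ → (StrongDual ℂ E →L[ℂ] StrongDual ℂ F),
          (∀ γ : Γ, ‖π γ‖ ≤ C) ∧
          ∀ (f : StrongDual ℂ F) (y : F),
            Tendsto (fun γ : Γ => π γ (dualTranspose ω f) y) (@Filter.atTop Γ p)
              (nhds (f y)))] := by
  tfae_have 1 → 3 := by
    rintro ⟨π, hπ⟩
    refine ⟨‖π‖ + 1, by positivity, Unit, ⟨()⟩, inferInstance,
      ⟨fun a b => ⟨(), le_refl _, le_refl _⟩⟩, fun _ => π,
      fun _ => le_add_of_le_of_nonneg le_rfl zero_le_one, fun f y => ?_⟩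
    simp only [hπ f]; exact (tendsto_const_nhds : Tendsto (fun _ : Unit => f y) atTop (nhds (f y)))
  tfae_have 2 → 1 := by
    rintro ⟨ρ, hρ⟩
    let π' : StrongDual ℂ E →L[ℂ] StrongDual ℂ F := ρ.flip
    refine ⟨π', fun f => ?_⟩
    ext y
    have : (ρ y) (dualTranspose ω f) = f y := by
      have := congrArg (fun Φ => Φ f) (hρ y)
      simpa [dualTranspose_apply] using this
    simpa [π', dualTranspose_apply, inclusionInDoubleDual] using this
  tfae_have 3 → 2 := by
    rintro ⟨C, hC, Γ, hne, p, hdir, π, hbdd, hlim⟩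
    letI := p
    letI : IsDirected Γ (· ≤ ·) := hdir
    haveI : (atTop : Filter Γ).NeBot := atTop_neBot_iff.mpr ⟨hne, hdir⟩
    obtain ⟨U, hU⟩ := Filter.exists_ultrafilter_le (atTop : Filter Γ)
    -- for each y, g the net γ ↦ π γ g y is bounded
    have hb : ∀ (y : F) (g : StrongDual ℂ E) (γ : Γ), ‖π γ g y‖ ≤ C * ‖g‖ * ‖y‖ := by
      intro y g γ
      calc ‖π γ g y‖ ≤ ‖π γ g‖ * ‖y‖ := (π γ g).le_opNorm y
        _ ≤ ‖π γ‖ * ‖g‖ * ‖y‖ := by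
            gcongr; exact (π γ).le_opNorm g
        _ ≤ C * ‖g‖ * ‖y‖ := by gcongr; exact hbdd γ
    set L : F → StrongDual ℂ E → ℂ := fun y g => limUnder (U : Filter Γ) (fun γ => π γ g y) with hL
    have key : ∀ (y : F) (g : StrongDual ℂ E),
        ‖L y g‖ ≤ C * ‖g‖ * ‖y‖ ∧ Tendsto (fun γ => π γ g y) (U : Filter Γ) (nhds (L y g)) := by
      intro y g
      obtain ⟨c, hc1, hc2⟩ := exists_tendsto_of_bounded U (fun γ => π γ g y) (C * ‖g‖ * ‖y‖)
        (hb y g)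
      have : L y g = c := hc2.limUnder_eq
      rw [this]; exact ⟨hc1, hc2⟩
    have hadd_g : ∀ (y : F) (g₁ g₂ : StrongDual ℂ E), L y (g₁ + g₂) = L y g₁ + L y g₂ := by
      intro y g₁ g₂
      have : Tendsto (fun γ => π γ (g₁ + g₂) y) (U : Filter Γ) (nhds (L y g₁ + L y g₂)) := by
        simpa [map_add] using ((key y g₁).2.add (key y g₂).2)
      exact this.limUnder_eq
    have hsmul_g : ∀ (y : F) (c : ℂ) (g : StrongDual ℂ E), L y (c • g) = c * L y g := by
      intro y c g
      have : Tendsto (fun γ => π γ (c • g) y) (U : Filter Γ) (nhds (c * L y g)) := by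
        simpa [map_smul, smul_eq_mul] using (tendsto_const_nhds.mul (key y g).2)
      exact this.limUnder_eq
    -- build ρ y : StrongDual ℂ (StrongDual ℂ E)
    have hy_add : ∀ (y₁ y₂ : F) (g : StrongDual ℂ E), L (y₁ + y₂) g = L y₁ g + L y₂ g := by
      intro y₁ y₂ g
      have : Tendsto (fun γ => π γ g (y₁ + y₂)) (U : Filter Γ) (nhds (L y₁ g + L y₂ g)) := by
        simpa [map_add] using ((key y₁ g).2.add (key y₂ g).2)
      exact this.limUnder_eq
    have hy_smul : ∀ (c : ℂ) (y : F) (g : StrongDual ℂ E), L (c • y) g = c * L y g := by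
      intro c y g
      have : Tendsto (fun γ => π γ g (c • y)) (U : Filter Γ) (nhds (c * L y g)) := by
        simpa [map_smul, smul_eq_mul] using (tendsto_const_nhds.mul (key y g).2)
      exact this.limUnder_eq
    let ρ₀ : F → StrongDual ℂ (StrongDual ℂ E) := fun y =>
      LinearMap.mkContinuous
        { toFun := L y
          map_add' := hadd_g y
          map_smul' := fun c g => hsmul_g y c g }
        (C * ‖y‖)
        (fun g => by
          calc ‖L y g‖ ≤ C * ‖g‖ * ‖y‖ := (key y g).1
            _ = C * ‖y‖ * ‖g‖ := by ring)
    have hρ₀ : ∀ y g, ρ₀ y g = L y g := fun _ _ => rfl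
    let ρ : F →L[ℂ] StrongDual ℂ (StrongDual ℂ E) :=
      LinearMap.mkContinuous
        { toFun := ρ₀
          map_add' := fun y₁ y₂ => by
            ext g; simp [hρ₀, hy_add]
          map_smul' := fun c y => by
            ext g; simp [hρ₀, hy_smul] }
        C
        (fun y => by
          refine ContinuousLinearMap.opNorm_le_bound _ (by positivity) (fun g => ?_)
          calc ‖ρ₀ y g‖ = ‖L y g‖ := by rw [hρ₀]
            _ ≤ C * ‖g‖ * ‖y‖ := (key y g).1
            _ = C * ‖y‖ * ‖g‖ := by ring)
    refine ⟨ρ, fun y => ?_⟩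
    ext f
    have h1 : (ρ y) (dualTranspose ω f) = L y (dualTranspose ω f) := rfl
    have h2 : Tendsto (fun γ => π γ (dualTranspose ω f) y) (U : Filter Γ) (nhds (f y)) :=
      (hlim f y).mono_left hU
    have h3 : L y (dualTranspose ω f) = f y := h2.limUnder_eq
    simp only [dualTranspose_apply, inclusionInDoubleDual]
    rw [h1, h3]
    rfl
  tfae_finish
end
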